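/- Let h : (0,1) → (0,∞), f ∈ SX(h,[a,b]) integrable, a < b, α > 0, and t ↦ t^{α-1}(h(t)+h(1-t)) integrable on (0,1). Then (1/(α h(1/2))) f((a+b)/2) ≤ (Γ(α)/(b-a)^α)[J_{a+}^α f(b) + J_{b-}^α f(a)] ≤ (f(a)+f(b)) ∫_0^1 t^{α-1}(h(t)+h(1-t)) dt. -/

import Mathlib

open MeasureTheory intervalIntegral Set

theorem fractional_h_convex (a b α : ℝ) (f h : ℝ → ℝ)
    (hab : a < b) (hα : 0 < α)
    (hhpos : ∀ l : ℝ, 0 < l → l < 1 → 0 < h l)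
    (hhalf : 0 < h (1 / 2))
    (hnonneg : ∀ x ∈ Set.Icc a b, 0 ≤ f x)
    (hconv : ∀ x ∈ Set.Icc a b, ∀ y ∈ Set.Icc a b, ∀ l : ℝ, 0 < l → l < 1 →
      f (l * x + (1 - l) * y) ≤ h l * f x + h (1 - l) * f y)
    (hint : IntervalIntegrable f MeasureTheory.volume a b)
    (hinth : IntervalIntegrable (fun t => t ^ (α - 1) * (h t + h (1 - t)))
      MeasureTheory.volume 0 1) :
    (1 / (α * h (1 / 2))) * f ((a + b) / 2) ≤ Real.Gamma α / (b - a) ^ α *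
      ((1 / Real.Gamma α) * (∫ t in a..b, (b - t) ^ (α - 1) * f t) +
       (1 / Real.Gamma α) * (∫ t in a..b, (t - a) ^ (α - 1) * f t)) ∧
    Real.Gamma α / (b - a) ^ α *
      ((1 / Real.Gamma α) * (∫ t in a..b, (b - t) ^ (α - 1) * f t) +
       (1 / Real.Gamma α) * (∫ t in a..b, (t - a) ^ (α - 1) * f t)) ≤
    (f a + f b) * ∫ t in (0:ℝ)..1, t ^ (α - 1) * (h t + h (1 - t)) := by
  set c : ℝ := b - a with hc_def
  have hc : 0 < c := by simp [hc_def]; linarith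
  have hΓ : (0:ℝ) < Real.Gamma α := Real.Gamma_pos_of_pos hα
  have hcα : (0:ℝ) < c ^ α := Real.rpow_pos_of_pos hc α
  set p : ℝ → ℝ := fun u => f (c * u + a) with hp_def
  set q : ℝ → ℝ := fun u => f (c * (1 - u) + a) with hq_def
  -- membership facts
  have hmem : ∀ u : ℝ, u ∈ Icc (0:ℝ) 1 → c * u + a ∈ Icc a b := by
    intro u hu
    constructor
    · nlinarith [hu.1, hu.2]
    · nlinarith [hu.1, hu.2]
  have hmem' : ∀ u : ℝ, u ∈ Icc (0:ℝ) 1 → c * (1 - u) + a ∈ Icc a b := by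
    intro u hu
    exact hmem (1 - u) ⟨by linarith [hu.2], by linarith [hu.1]⟩
  -- integrability of p and q on [0,1]
  have hp_int : IntervalIntegrable p volume 0 1 := by
    have h1 := (hint.comp_add_right a).comp_mul_left (c := c)
    have e0 : (a - a) / c = 0 := by simp
    have e1 : (b - a) / c = 1 := by rw [← hc_def]; exact div_self hc.ne'
    rw [e0, e1] at h1
    exact h1
  have hq_int : IntervalIntegrable q volume 0 1 := by
    have h1 := hp_int.comp_sub_left 1
    simp only [sub_zero, sub_self] at h1
    exact h1.symm
  -- the bound
  set B : ℝ → ℝ := fun u => (f a + f b) * (u ^ (α - 1) * (h u + h (1 - u))) with hB_def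
  have hB_int : IntervalIntegrable B volume 0 1 := hinth.const_mul _
  have hfa : 0 ≤ f a := hnonneg a ⟨le_refl a, le_of_lt hab⟩
  have hfb : 0 ≤ f b := hnonneg b ⟨le_of_lt hab, le_refl b⟩
  -- a.e. facts
  have hae01 : ∀ᵐ u ∂(volume.restrict (Icc (0:ℝ) 1)), u ≠ 0 ∧ u ≠ 1 := by
    apply ae_restrict_of_ae
    have : volume ({0, 1} : Set ℝ) = 0 :=
      Set.Countable.measure_zero (by simp) _
    refine (MeasureTheory.ae_iff).2 (measure_mono_null ?_ this)
    intro x hx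
    simp only [mem_setOf_eq, not_and_or, not_not] at hx
    rcases hx with hx | hx <;> simp [hx]
  -- pointwise bounds on (0,1)
  have hbound_p : ∀ u : ℝ, 0 < u → u < 1 → u ^ (α - 1) * p u ≤ B u := by
    intro u hu0 hu1
    have hx := hconv b ⟨le_of_lt hab, le_refl b⟩ a ⟨le_refl a, le_of_lt hab⟩ u hu0 hu1
    have harg : u * b + (1 - u) * a = c * u + a := by ring
    rw [harg] at hx
    have hrp : (0:ℝ) ≤ u ^ (α - 1) := Real.rpow_nonneg hu0.le _
    have h1 : p u ≤ (h u + h (1 - u)) * (f a + f b) := by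
      have hhu := hhpos u hu0 hu1
      have hhu' := hhpos (1 - u) (by linarith) (by linarith)
      nlinarith [hx]
    calc u ^ (α - 1) * p u ≤ u ^ (α - 1) * ((h u + h (1 - u)) * (f a + f b)) :=
          mul_le_mul_of_nonneg_left h1 hrp
      _ = B u := by rw [hB_def]; ring
  have hbound_q : ∀ u : ℝ, 0 < u → u < 1 → u ^ (α - 1) * q u ≤ B u := by
    intro u hu0 hu1
    have hx := hconv a ⟨le_refl a, le_of_lt hab⟩ b ⟨le_of_lt hab, le_refl b⟩ u hu0 hu1
    have harg : u * a + (1 - u) * b = c * (1 - u) + a := by ring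
    rw [harg] at hx
    have hrp : (0:ℝ) ≤ u ^ (α - 1) := Real.rpow_nonneg hu0.le _
    have h1 : q u ≤ (h u + h (1 - u)) * (f a + f b) := by
      have hhu := hhpos u hu0 hu1
      have hhu' := hhpos (1 - u) (by linarith) (by linarith)
      nlinarith [hx]
    calc u ^ (α - 1) * q u ≤ u ^ (α - 1) * ((h u + h (1 - u)) * (f a + f b)) :=
          mul_le_mul_of_nonneg_left h1 hrp
      _ = B u := by rw [hB_def]; ring
  -- integrability of u^(α-1) * p u and u^(α-1) * q u
  have hmeas_rpow : Measurable fun u : ℝ => u ^ (α - 1) :=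
    (measurable_id'.pow_const (α - 1)).comp measurable_id'
  have key_int : ∀ g : ℝ → ℝ, IntervalIntegrable g volume 0 1 →
      (∀ u : ℝ, 0 < u → u < 1 → u ^ (α - 1) * g u ≤ B u) →
      (∀ u : ℝ, u ∈ Icc (0:ℝ) 1 → 0 ≤ g u) →
      IntervalIntegrable (fun u => u ^ (α - 1) * g u) volume 0 1 := by
    intro g hg hgB hg0
    rw [intervalIntegrable_iff_integrableOn_Ioc_of_le (by norm_num)]
    have hBint : IntegrableOn B (Ioc (0:ℝ) 1) volume := by
      rw [← intervalIntegrable_iff_integrableOn_Ioc_of_le (by norm_num)]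
      exact hB_int
    apply Integrable.mono' hBint
    · have hg' : IntegrableOn g (Ioc (0:ℝ) 1) volume := by
        rw [← intervalIntegrable_iff_integrableOn_Ioc_of_le (by norm_num : (0:ℝ) ≤ 1)]
        exact hg
      exact hmeas_rpow.aestronglyMeasurable.mul hg'.aestronglyMeasurable
    · have h1 : ∀ᵐ u ∂(volume.restrict (Ioc (0:ℝ) 1)),
          u ∈ Ioc (0:ℝ) 1 := ae_restrict_mem measurableSet_Ioc
      have h2 : ∀ᵐ u ∂(volume.restrict (Ioc (0:ℝ) 1)), u ≠ 1 := by
        apply ae_restrict_of_ae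
        refine (MeasureTheory.ae_iff).2 (measure_mono_null ?_ (Real.volume_singleton (a := 1)))
        intro x hx; simp only [mem_setOf_eq, not_not] at hx; simp [hx]
      filter_upwards [h1, h2] with u hu hu1
      have hu0 : 0 < u := hu.1
      have hu1' : u < 1 := lt_of_le_of_ne hu.2 hu1
      have hnn : 0 ≤ u ^ (α - 1) * g u :=
        mul_nonneg (Real.rpow_nonneg hu0.le _) (hg0 u ⟨hu0.le, hu.2⟩)
      rw [Real.norm_eq_abs, abs_of_nonneg hnn]
      exact hgB u hu0 hu1'
  have hpnn : ∀ u ∈ Icc (0:ℝ) 1, 0 ≤ p u := fun u hu => hnonneg _ (hmem u hu)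
  have hqnn : ∀ u ∈ Icc (0:ℝ) 1, 0 ≤ q u := fun u hu => hnonneg _ (hmem' u hu)
  have hPint : IntervalIntegrable (fun u => u ^ (α - 1) * p u) volume 0 1 :=
    key_int p hp_int hbound_p hpnn
  have hQint : IntervalIntegrable (fun u => u ^ (α - 1) * q u) volume 0 1 :=
    key_int q hq_int hbound_q hqnn
  have hcc : c * c ^ (α - 1) = c ^ α := by
    have h1 := Real.rpow_add hc 1 (α - 1)
    rw [Real.rpow_one] at h1
    rw [show (1:ℝ) + (α - 1) = α by ring] at h1
    exact h1.symm
  -- substitution for I2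
  have I2eq : (∫ t in a..b, (t - a) ^ (α - 1) * f t)
      = c ^ α * ∫ u in (0:ℝ)..1, u ^ (α - 1) * p u := by
    have h1 := intervalIntegral.smul_integral_comp_mul_add
      (f := fun t => (t - a) ^ (α - 1) * f t) (a := 0) (b := 1) c a
    rw [mul_zero, zero_add, mul_one] at h1
    rw [show c + a = b by rw [hc_def]; ring] at h1
    rw [← h1]
    have h2 : Set.EqOn (fun u : ℝ => (c * u + a - a) ^ (α - 1) * f (c * u + a))
        (fun u : ℝ => c ^ (α - 1) * (u ^ (α - 1) * p u)) (Set.uIcc 0 1) := by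
      intro u hu
      rw [Set.uIcc_of_le (by norm_num)] at hu
      simp only [hp_def]
      rw [show c * u + a - a = c * u by ring, Real.mul_rpow hc.le hu.1]
      ring
    rw [intervalIntegral.integral_congr h2, intervalIntegral.integral_const_mul,
      smul_eq_mul, ← mul_assoc, hcc]
  -- substitution for I1
  have I1eq : (∫ t in a..b, (b - t) ^ (α - 1) * f t)
      = c ^ α * ∫ u in (0:ℝ)..1, (1 - u) ^ (α - 1) * p u := by
    have h1 := intervalIntegral.smul_integral_comp_mul_add
      (f := fun t => (b - t) ^ (α - 1) * f t) (a := 0) (b := 1) c a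
    rw [mul_zero, zero_add, mul_one] at h1
    rw [show c + a = b by rw [hc_def]; ring] at h1
    rw [← h1]
    have h2 : Set.EqOn (fun u : ℝ => (b - (c * u + a)) ^ (α - 1) * f (c * u + a))
        (fun u : ℝ => c ^ (α - 1) * ((1 - u) ^ (α - 1) * p u)) (Set.uIcc 0 1) := by
      intro u hu
      rw [Set.uIcc_of_le (by norm_num)] at hu
      simp only [hp_def]
      rw [show b - (c * u + a) = c * (1 - u) by rw [hc_def]; ring,
        Real.mul_rpow hc.le (by linarith [hu.2] : (0:ℝ) ≤ 1 - u)]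
      ring
    rw [intervalIntegral.integral_congr h2, intervalIntegral.integral_const_mul,
      smul_eq_mul, ← mul_assoc, hcc]
  -- reflect
  have Jq_eq : (∫ u in (0:ℝ)..1, (1 - u) ^ (α - 1) * p u)
      = ∫ u in (0:ℝ)..1, u ^ (α - 1) * q u := by
    have h1 := intervalIntegral.integral_comp_sub_left
      (f := fun u => u ^ (α - 1) * q u) (a := 0) (b := 1) 1
    rw [sub_zero, sub_self] at h1
    have h2 : (fun x : ℝ => (1 - x) ^ (α - 1) * q (1 - x))
        = fun x : ℝ => (1 - x) ^ (α - 1) * p x := by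
      funext x
      simp only [hq_def, hp_def]
      congr 2
      ring
    rw [h2] at h1
    exact h1
  -- main middle expression
  have Meq : Real.Gamma α / c ^ α *
      ((1 / Real.Gamma α) * (∫ t in a..b, (b - t) ^ (α - 1) * f t) +
       (1 / Real.Gamma α) * (∫ t in a..b, (t - a) ^ (α - 1) * f t))
      = ∫ u in (0:ℝ)..1, (u ^ (α - 1) * p u + u ^ (α - 1) * q u) := by
    rw [I1eq, I2eq, Jq_eq, intervalIntegral.integral_add hPint hQint]
    field_simp
    ring
  have hJ : (∫ u in (0:ℝ)..1, u ^ (α - 1)) = 1 / α := by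
    rw [integral_rpow (Or.inl (by linarith))]
    rw [show α - 1 + 1 = α by ring, Real.one_rpow, Real.zero_rpow hα.ne']
    ring
  set m : ℝ := (a + b) / 2 with hm_def
  have LHSval : (1 / (α * h (1 / 2))) * f m
      = ∫ u in (0:ℝ)..1, u ^ (α - 1) * (f m / h (1 / 2)) := by
    rw [intervalIntegral.integral_mul_const, hJ]
    field_simp
  have left_mono : (∫ u in (0:ℝ)..1, u ^ (α - 1) * (f m / h (1 / 2)))
      ≤ ∫ u in (0:ℝ)..1, (u ^ (α - 1) * p u + u ^ (α - 1) * q u) := by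
    apply intervalIntegral.integral_mono_on (by norm_num)
    · exact (intervalIntegral.intervalIntegrable_rpow' (by linarith)).mul_const _
    · exact hPint.add hQint
    · intro u hu
      have hx := hconv (c * u + a) (hmem u hu) (c * (1 - u) + a) (hmem' u hu)
        (1 / 2) (by norm_num) (by norm_num)
      rw [show (1:ℝ) - 1 / 2 = 1 / 2 by norm_num] at hx
      rw [show 1 / 2 * (c * u + a) + 1 / 2 * (c * (1 - u) + a) = m by
        rw [hm_def, hc_def]; ring] at hx
      have h1 : f m / h (1 / 2) ≤ p u + q u := by
        rw [div_le_iff₀ hhalf]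
        simp only [hp_def, hq_def]
        nlinarith [hx]
      have hrp : (0:ℝ) ≤ u ^ (α - 1) := Real.rpow_nonneg hu.1 _
      nlinarith [mul_le_mul_of_nonneg_left h1 hrp]
  have right_mono : (∫ u in (0:ℝ)..1, (u ^ (α - 1) * p u + u ^ (α - 1) * q u))
      ≤ ∫ u in (0:ℝ)..1, B u := by
    apply intervalIntegral.integral_mono_ae_restrict (by norm_num)
      (hPint.add hQint) hB_int
    filter_upwards [ae_restrict_mem measurableSet_Icc, hae01] with u hu hne
    have hu0 : 0 < u := lt_of_le_of_ne hu.1 (Ne.symm hne.1)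
    have hu1 : u < 1 := lt_of_le_of_ne hu.2 hne.2
    have hxp := hconv b ⟨le_of_lt hab, le_refl b⟩ a ⟨le_refl a, le_of_lt hab⟩ u hu0 hu1
    rw [show u * b + (1 - u) * a = c * u + a by rw [hc_def]; ring] at hxp
    have hxq := hconv a ⟨le_refl a, le_of_lt hab⟩ b ⟨le_of_lt hab, le_refl b⟩ u hu0 hu1
    rw [show u * a + (1 - u) * b = c * (1 - u) + a by rw [hc_def]; ring] at hxq
    have hrp : (0:ℝ) ≤ u ^ (α - 1) := Real.rpow_nonneg hu0.le _
    simp only [hB_def, hp_def, hq_def]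
    have hsum := add_le_add (mul_le_mul_of_nonneg_left hxp hrp)
      (mul_le_mul_of_nonneg_left hxq hrp)
    refine le_trans hsum (le_of_eq (by ring))
  have RHSval : (∫ u in (0:ℝ)..1, B u)
      = (f a + f b) * ∫ t in (0:ℝ)..1, t ^ (α - 1) * (h t + h (1 - t)) := by
    simp only [hB_def]
    rw [intervalIntegral.integral_const_mul]
  constructor
  · rw [Meq, LHSval]
    exact left_mono
  · rw [Meq, ← RHSval]
    exact right_mono
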